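/- Let q be a prime power, F_q the finite field with q elements, and integers 1 ≤ r ≤ ℓ ≤ m and 1 ≤ t < ℓ. Then w_r(t;ℓ,m) = q^t · 𝔴_{r−1}(t;ℓ−1,m−1) + (q−1)q^{t−1} (μ_t(ℓ−1,m) − μ_t(ℓ−1,m−1)) + (q−1)q^{m−1} ν_{t−1}(ℓ−1,m). -/

import Mathlib

open Finset Matrix

/-- The `r`-th partial trace `τ_r(M) = Σ_{i=1}^r M_{ii}`. -/
def ptrace {K : Type} [Field K] {a b : ℕ} (r : ℕ) (M : Matrix (Fin a) (Fin b) K) : K :=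
  ∑ i ∈ Finset.range r, if h : i < a ∧ i < b then M ⟨i, h.1⟩ ⟨i, h.2⟩ else 0

/-- `mu K a b t` is the number of `a × b` matrices over the field `K` of rank exactly `t`. -/
noncomputable def mu (K : Type) [Field K] [Fintype K] (a b t : ℕ) : ℕ :=
  Nat.card {M : Matrix (Fin a) (Fin b) K // M.rank = t}

/-- `nu K a b t` is the number of `a × b` matrices over the field `K` of rank at most `t`. -/
noncomputable def nu (K : Type) [Field K] [Fintype K] (a b t : ℕ) : ℕ :=
  Nat.card {M : Matrix (Fin a) (Fin b) K // M.rank ≤ t}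

/-- `wfrak K a b r t` is the number of `a × b` matrices over `K` of rank exactly `t`
with `τ_r(M) ≠ 0`, i.e. the quantity `𝔴_r(t; a, b)`. -/
noncomputable def wfrak (K : Type) [Field K] [Fintype K] (a b r t : ℕ) : ℕ :=
  Nat.card {M : Matrix (Fin a) (Fin b) K // M.rank = t ∧ ptrace r M ≠ 0}

/-- `wle K a b r t` is the number of `a × b` matrices over `K` of rank at most `t`
with `τ_r(M) ≠ 0`, i.e. the quantity `w_r(t; a, b)`. -/
noncomputable def wle (K : Type) [Field K] [Fintype K] (a b r t : ℕ) : ℕ :=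
  Nat.card {M : Matrix (Fin a) (Fin b) K // M.rank ≤ t ∧ ptrace r M ≠ 0}

/-! ### Auxiliary lemmas -/

section Aux

open Module Submodule Set

set_option linter.unusedSectionVars false
set_option linter.unusedVariables false

variable {K : Type} [Field K] {n k : ℕ}

/-- The shifted partial trace of the matrix obtained by deleting the first row:
`Σ_{j<s} P_{j, j+1}`. -/
def ptr' (s : ℕ) (P : Matrix (Fin n) (Fin (k+1)) K) : K :=
  ∑ j ∈ Finset.range s, if h : j < n ∧ j < k then P ⟨j, h.1⟩ ⟨j+1, Nat.succ_lt_succ h.2⟩ else 0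

lemma range_of_cons (x : Fin k → K) (P : Matrix (Fin n) (Fin k) K) :
    Set.range (Matrix.of (Fin.cons x P)) = insert x (Set.range P) := by
  have : (Matrix.of (Fin.cons x P) : Fin (n+1) → Fin k → K) = Fin.cons x P := rfl
  rw [this]
  exact Fin.range_cons x P

lemma rank_cons_eq (x : Fin k → K) (P : Matrix (Fin n) (Fin k) K) :
    (Matrix.of (Fin.cons x P)).rank =
      finrank K (span K (insert x (Set.range P))) := by
  rw [Matrix.rank_eq_finrank_span_row]
  exact congrArg (fun S => finrank K (span K S)) (range_of_cons x P)

lemma rank_eq_rowspan (P : Matrix (Fin n) (Fin k) K) :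
    P.rank = finrank K (span K (Set.range P)) :=
  Matrix.rank_eq_finrank_span_row P

lemma rank_cons_of_mem {x : Fin k → K} {P : Matrix (Fin n) (Fin k) K}
    (h : x ∈ span K (Set.range P)) :
    (Matrix.of (Fin.cons x P)).rank = P.rank := by
  rw [rank_cons_eq, rank_eq_rowspan, span_insert_eq_span h]

lemma rank_cons_of_not_mem {x : Fin k → K} {P : Matrix (Fin n) (Fin k) K}
    (h : x ∉ span K (Set.range P)) :
    (Matrix.of (Fin.cons x P)).rank = P.rank + 1 := by
  rw [rank_cons_eq, rank_eq_rowspan, span_insert]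
  have hx : x ≠ 0 := fun hx => h (hx ▸ (span K (Set.range P)).zero_mem)
  have hdis : Disjoint (K ∙ x) (span K (Set.range P)) :=
    ((disjoint_span_singleton' hx).mpr h).symm
  have := Submodule.finrank_sup_add_finrank_inf_eq (K ∙ x) (span K (Set.range P))
  rw [hdis.eq_bot, finrank_bot, add_zero, finrank_span_singleton hx] at this
  omega

lemma rank_cons_le (x : Fin k → K) (P : Matrix (Fin n) (Fin k) K) :
    (Matrix.of (Fin.cons x P)).rank ≤ P.rank + 1 := by
  by_cases h : x ∈ span K (Set.range P)
  · rw [rank_cons_of_mem h]; omega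
  · rw [rank_cons_of_not_mem h]

lemma rank_le_rank_cons (x : Fin k → K) (P : Matrix (Fin n) (Fin k) K) :
    P.rank ≤ (Matrix.of (Fin.cons x P)).rank := by
  rw [rank_cons_eq, rank_eq_rowspan]
  exact Submodule.finrank_mono (span_mono (Set.subset_insert _ _))

lemma card_fiber_eq [Fintype K] (V : Type) [AddCommGroup V] [Module K V] [Fintype V]
    (ψ : V →ₗ[K] K) (hψ : ∃ v, ψ v ≠ 0) (c : K) :
    Nat.card {v : V // ψ v = c} = Fintype.card K ^ (finrank K V - 1) := by
  classical
  obtain ⟨v₀, hv₀⟩ := hψ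
  set vc : V := (c / ψ v₀) • v₀ with hvc
  have hψvc : ψ vc = c := by
    rw [hvc, LinearMap.map_smul, smul_eq_mul, div_mul_cancel₀ _ hv₀]
  have e : {v : V // ψ v = c} ≃ {v : V // v ∈ LinearMap.ker ψ} :=
    { toFun := fun v => ⟨v.1 - vc, by
        simp only [LinearMap.mem_ker, map_sub, v.2, hψvc, sub_self]⟩
      invFun := fun v => ⟨v.1 + vc, by
        have := v.2
        simp only [LinearMap.mem_ker] at this
        rw [map_add, this, hψvc, zero_add]⟩
      left_inv := fun v => by simp
      right_inv := fun v => by simp }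
  rw [Nat.card_congr e, Nat.card_eq_fintype_card]
  have hcard : Fintype.card {v : V // v ∈ LinearMap.ker ψ} =
      Fintype.card K ^ finrank K (LinearMap.ker ψ) := card_eq_pow_finrank
  rw [hcard]
  congr 1
  have hsurj : LinearMap.range ψ = ⊤ := by
    rw [eq_top_iff]
    rintro c' -
    exact ⟨(c' / ψ v₀) • v₀, by rw [LinearMap.map_smul, smul_eq_mul, div_mul_cancel₀ _ hv₀]⟩
  have h2 := LinearMap.finrank_range_add_finrank_ker ψ
  rw [hsurj, finrank_top, finrank_self] at h2
  omega

lemma card_submodule [Fintype K] {m : ℕ} (W : Submodule K (Fin m → K)) :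
    Nat.card {x : Fin m → K // x ∈ W} = Fintype.card K ^ finrank K W := by
  classical
  rw [Nat.card_eq_fintype_card]
  exact card_eq_pow_finrank

lemma card_ne [Fintype K] (k : ℕ) (d : K) :
    Nat.card {x : Fin (k+1) → K // x 0 ≠ d} =
      Fintype.card K ^ (k+1) - Fintype.card K ^ k := by
  classical
  rw [Nat.card_eq_fintype_card, Fintype.card_subtype_compl]
  congr 1
  · simp [Fintype.card_fun]
  · have := card_fiber_eq (Fin (k+1) → K) (LinearMap.proj 0) ⟨fun _ => 1, one_ne_zero⟩ d
    rw [Nat.card_eq_fintype_card] at this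
    simp [Module.finrank_fin_fun] at this
    exact (Fintype.card_congr (Equiv.refl _)).trans this

def mem_and_equiv {m : ℕ} (W : Submodule K (Fin m → K)) (p : (Fin m → K) → Prop) :
    {x : Fin m → K // x ∈ W ∧ p x} ≃ {w : W // p w.1} :=
  { toFun := fun x => ⟨⟨x.1, x.2.1⟩, x.2.2⟩
    invFun := fun w => ⟨w.1.1, w.1.2, w.2⟩
    left_inv := fun x => rfl
    right_inv := fun w => rfl }

lemma card_mem_fiber [Fintype K] {m : ℕ} (W : Submodule K (Fin m → K)) (i : Fin m)
    (hW : ∃ w ∈ W, w i ≠ 0) (d : K) :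
    Nat.card {x : Fin m → K // x ∈ W ∧ x i = d} =
      Fintype.card K ^ (finrank K W - 1) := by
  classical
  rw [Nat.card_congr (mem_and_equiv W (fun x => x i = d))]
  obtain ⟨w₀, hw₀W, hw₀⟩ := hW
  exact card_fiber_eq W ((LinearMap.proj i).comp W.subtype) ⟨⟨w₀, hw₀W⟩, hw₀⟩ d

lemma card_mem_ne [Fintype K] {m : ℕ} (W : Submodule K (Fin m → K)) (i : Fin m)
    (hW : ∃ w ∈ W, w i ≠ 0) (d : K) :
    Nat.card {x : Fin m → K // x ∈ W ∧ x i ≠ d} =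
      Fintype.card K ^ finrank K W - Fintype.card K ^ (finrank K W - 1) := by
  classical
  rw [Nat.card_congr (mem_and_equiv W (fun x => x i ≠ d)), Nat.card_eq_fintype_card,
    Fintype.card_subtype_compl]
  congr 1
  · have := card_submodule W
    rw [Nat.card_eq_fintype_card] at this
    convert this using 1
  · have := card_mem_fiber W i hW d
    rw [Nat.card_congr (mem_and_equiv W (fun x => x i = d)), Nat.card_eq_fintype_card] at this
    exact this

lemma card_subtype_sigma {ι : Type*} [Fintype ι] {β : ι → Type*} [∀ i, Fintype (β i)]
    (p : (Σ i, β i) → Prop) :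
    Nat.card {z : Σ i, β i // p z} = ∑ i, Nat.card {b : β i // p ⟨i, b⟩} := by
  classical
  have e : {z : Σ i, β i // p z} ≃ Σ i, {b : β i // p ⟨i, b⟩} :=
    { toFun := fun z => ⟨z.1.1, ⟨z.1.2, z.2⟩⟩
      invFun := fun w => ⟨⟨w.1, w.2.1⟩, w.2.2⟩
      left_inv := fun z => rfl
      right_inv := fun w => rfl }
  rw [Nat.card_congr e, Nat.card_eq_fintype_card, Fintype.card_sigma]
  exact Finset.sum_congr rfl fun i _ => (Nat.card_eq_fintype_card).symm

def rowDecomp : Matrix (Fin (n+1)) (Fin k) K ≃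
    Σ _P : Matrix (Fin n) (Fin k) K, (Fin k → K) where
  toFun M := ⟨Matrix.of (fun i j => M i.succ j), M 0⟩
  invFun z := Matrix.of (Fin.cons z.2 z.1)
  left_inv M := by
    show Matrix.of (Fin.cons (M 0) (fun i j => M i.succ j)) = M
    funext i j
    refine Fin.cases ?_ ?_ i
    · rfl
    · intro i; rfl
  right_inv z := by
    rcases z with ⟨P, x⟩
    rfl

lemma card_matrix_split [Fintype K] (p : Matrix (Fin (n+1)) (Fin k) K → Prop) :
    Nat.card {M : Matrix (Fin (n+1)) (Fin k) K // p M} =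
      ∑ P : Matrix (Fin n) (Fin k) K,
        Nat.card {x : Fin k → K // p (Matrix.of (Fin.cons x P))} := by
  classical
  have e := Equiv.subtypeEquiv (p := p) (q := fun z => p (rowDecomp.symm z)) rowDecomp
    (fun M => by simp only [rowDecomp.symm_apply_apply])
  rw [Nat.card_congr e, card_subtype_sigma (fun z => p (rowDecomp.symm z))]
  rfl

lemma ptrace_cons (s : ℕ) (x : Fin (k+1) → K) (P : Matrix (Fin n) (Fin (k+1)) K) :
    ptrace (s+1) (Matrix.of (Fin.cons x P)) = x 0 + ptr' s P := by
  rw [ptrace, Finset.sum_range_succ', ptr']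
  have h0 : (if h : 0 < n + 1 ∧ 0 < k + 1 then
      (Matrix.of (Fin.cons x P)) ⟨0, h.1⟩ ⟨0, h.2⟩ else 0) = x 0 := by
    rw [dif_pos ⟨Nat.succ_pos n, Nat.succ_pos k⟩, Matrix.of_apply]
    simp [Fin.mk_zero]
    exact congrFun (Fin.cons_zero (α := fun _ => Fin (k+1) → K) x P) 0
  rw [h0, add_comm]
  congr 1
  refine Finset.sum_congr rfl fun j _ => ?_
  by_cases h : j < n ∧ j < k
  · rw [dif_pos ⟨Nat.succ_lt_succ h.1, Nat.succ_lt_succ h.2⟩, dif_pos h, Matrix.of_apply]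
    have hrow : (⟨j+1, Nat.succ_lt_succ h.1⟩ : Fin (n+1)) = Fin.succ ⟨j, h.1⟩ := rfl
    rw [hrow]
    exact congrFun (Fin.cons_succ (α := fun _ => Fin (k+1) → K) x P _) _
  · rw [dif_neg (by omega), dif_neg h]

/-- Prepend a zero column to a matrix. -/
def pcol (N : Matrix (Fin n) (Fin k) K) : Matrix (Fin n) (Fin (k+1)) K :=
  Matrix.of (fun i => Fin.cons 0 (N i))

@[simp] lemma pcol_zero (N : Matrix (Fin n) (Fin k) K) (i : Fin n) : pcol N i 0 = 0 := by
  show Fin.cons (α := fun _ => K) (0 : K) (N i) 0 = 0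
  exact Fin.cons_zero _ _

@[simp] lemma pcol_succ (N : Matrix (Fin n) (Fin k) K) (i : Fin n) (j : Fin k) :
    pcol N i j.succ = N i j := by
  show Fin.cons (α := fun _ => K) (0 : K) (N i) j.succ = N i j
  exact Fin.cons_succ _ _ _

lemma pcol_transpose (N : Matrix (Fin n) (Fin k) K) :
    ((pcol N)ᵀ : Fin (k+1) → Fin n → K) =
      Fin.cons (α := fun _ => Fin n → K) (0 : Fin n → K) (fun jj i => N i jj) := by
  funext j
  refine Fin.cases ?_ ?_ j
  · funext i
    show (pcol N)ᵀ 0 i = Fin.cons (α := fun _ => Fin n → K) (0 : Fin n → K) (fun jj i => N i jj) 0 i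
    rw [Matrix.transpose_apply, pcol_zero, Fin.cons_zero]
    rfl
  · intro jj
    funext i
    show (pcol N)ᵀ jj.succ i =
      Fin.cons (α := fun _ => Fin n → K) (0 : Fin n → K) (fun jj i => N i jj) jj.succ i
    rw [Matrix.transpose_apply, pcol_succ, Fin.cons_succ]

lemma pcol_rank (N : Matrix (Fin n) (Fin k) K) : (pcol N).rank = N.rank := by
  rw [Matrix.rank_eq_finrank_span_cols, Matrix.rank_eq_finrank_span_cols]
  have h1 : Set.range ((pcol N)ᵀ) = insert 0 (Set.range (fun jj i => N i jj)) := by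
    rw [show Set.range ((pcol N)ᵀ) = Set.range ((pcol N)ᵀ : Fin (k+1) → Fin n → K) from rfl,
      pcol_transpose, Fin.range_cons]
  have h2 : Set.range (fun jj i => N i jj) = Set.range Nᵀ := rfl
  have hspan : span K (Set.range ((pcol N)ᵀ)) = span K (Set.range Nᵀ) := by
    rw [h1, span_insert_zero, h2]
  exact congrArg (fun S : Submodule K (Fin n → K) => finrank K S) hspan

lemma ptr'_pcol (s : ℕ) (N : Matrix (Fin n) (Fin k) K) :
    ptr' s (pcol N) = ptrace s N := by
  rw [ptr', ptrace]
  refine Finset.sum_congr rfl fun j _ => ?_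
  by_cases h : j < n ∧ j < k
  · rw [dif_pos h, dif_pos h]
    have hcol : (⟨j+1, Nat.succ_lt_succ h.2⟩ : Fin (k+1)) = Fin.succ ⟨j, h.2⟩ := rfl
    rw [hcol, pcol_succ]
  · rw [dif_neg h, dif_neg h]

lemma pcol_eta {P : Matrix (Fin n) (Fin (k+1)) K} (h : ∀ i, P i 0 = 0) :
    pcol (Matrix.of fun i j => P i j.succ) = P := by
  funext i j
  refine Fin.cases ?_ ?_ j
  · rw [pcol_zero, h i]
  · intro jj
    rw [pcol_succ]
    rfl

lemma card_pcol [Fintype K] (p : Matrix (Fin n) (Fin (k+1)) K → Prop) :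
    Nat.card {P : Matrix (Fin n) (Fin (k+1)) K // (∀ i, P i 0 = 0) ∧ p P} =
      Nat.card {N : Matrix (Fin n) (Fin k) K // p (pcol N)} := by
  refine Nat.card_congr
    { toFun := fun P => ⟨Matrix.of fun i j => P.1 i j.succ, by
        rw [pcol_eta P.2.1]; exact P.2.2⟩
      invFun := fun N => ⟨pcol N.1, fun i => pcol_zero _ _, N.2⟩
      left_inv := fun P => Subtype.ext (pcol_eta P.2.1)
      right_inv := fun N => Subtype.ext (by
        funext i j
        exact pcol_succ _ _ _) }

open Classical in
lemma inner_count [Fintype K] {t : ℕ} (ht : 1 ≤ t) (s : ℕ) (P : Matrix (Fin n) (Fin (k+1)) K) :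
    Nat.card {x : Fin (k+1) → K //
        (Matrix.of (Fin.cons x P)).rank ≤ t ∧ ptrace (s+1) (Matrix.of (Fin.cons x P)) ≠ 0} =
      (if P.rank ≤ t-1 then Fintype.card K ^ (k+1) - Fintype.card K ^ k else 0)
      + (if P.rank = t ∧ ¬ (∀ i, P i 0 = 0) then
          Fintype.card K ^ t - Fintype.card K ^ (t-1) else 0)
      + (if P.rank = t ∧ (∀ i, P i 0 = 0) ∧ ptr' s P ≠ 0 then Fintype.card K ^ t else 0) := by
  rcases lt_trichotomy P.rank t with hlt | heq | hgt
  · rw [if_pos (by omega), if_neg (by rintro ⟨h, -⟩; omega),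
      if_neg (by rintro ⟨h, -⟩; omega), add_zero, add_zero]
    have hc : ∀ x : Fin (k+1) → K,
        ((Matrix.of (Fin.cons x P)).rank ≤ t ∧ ptrace (s+1) (Matrix.of (Fin.cons x P)) ≠ 0)
          ↔ x 0 ≠ -(ptr' s P) := by
      intro x
      rw [ptrace_cons, Ne, Ne, ← eq_neg_iff_add_eq_zero]
      exact ⟨fun h => h.2, fun h => ⟨le_trans (rank_cons_le x P) (by omega), h⟩⟩
    rw [Nat.card_congr (Equiv.subtypeEquivRight hc), card_ne]
  · set W := span K (Set.range P) with hWdef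
    have hfin : finrank K W = t := by rw [← rank_eq_rowspan]; exact heq
    have hrank : ∀ x : Fin (k+1) → K, (Matrix.of (Fin.cons x P)).rank ≤ t ↔ x ∈ W := by
      intro x
      constructor
      · intro h
        by_contra hx
        rw [rank_cons_of_not_mem hx] at h
        omega
      · intro hx
        rw [rank_cons_of_mem hx, heq]
    by_cases hz : ∀ i, P i 0 = 0
    · rw [if_neg (by omega), if_neg (fun h => h.2 hz), zero_add, zero_add]
      have hW0 : ∀ x ∈ W, x 0 = 0 := by
        intro x hx
        have hle : W ≤ LinearMap.ker (LinearMap.proj (R := K) (φ := fun _ : Fin (k+1) => K) 0) := by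
          rw [hWdef, span_le]
          rintro - ⟨i, rfl⟩
          exact hz i
        exact hle hx
      by_cases hptr : ptr' s P = 0
      · rw [if_neg (fun h => h.2.2 hptr)]
        have : IsEmpty {x : Fin (k+1) → K //
            (Matrix.of (Fin.cons x P)).rank ≤ t ∧ ptrace (s+1) (Matrix.of (Fin.cons x P)) ≠ 0} := by
          refine ⟨fun x => x.2.2 ?_⟩
          rw [ptrace_cons, hW0 x.1 ((hrank x.1).mp x.2.1), hptr, add_zero]
        exact Nat.card_of_isEmpty
      · rw [if_pos ⟨heq, hz, hptr⟩]
        have hc : ∀ x : Fin (k+1) → K,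
            ((Matrix.of (Fin.cons x P)).rank ≤ t ∧ ptrace (s+1) (Matrix.of (Fin.cons x P)) ≠ 0)
              ↔ x ∈ W := by
          intro x
          rw [ptrace_cons, hrank]
          constructor
          · exact fun h => h.1
          · intro hx
            refine ⟨hx, ?_⟩
            rw [hW0 x hx, zero_add]
            exact hptr
        rw [Nat.card_congr (Equiv.subtypeEquivRight hc), card_submodule, hfin]
    · rw [if_neg (by omega), if_pos ⟨heq, hz⟩, if_neg (fun h => hz h.2.1), add_zero, zero_add]
      push_neg at hz
      obtain ⟨i, hi⟩ := hz
      have hc : ∀ x : Fin (k+1) → K,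
          ((Matrix.of (Fin.cons x P)).rank ≤ t ∧ ptrace (s+1) (Matrix.of (Fin.cons x P)) ≠ 0)
            ↔ x ∈ W ∧ x 0 ≠ -(ptr' s P) := by
        intro x
        rw [ptrace_cons, hrank, Ne, Ne, ← eq_neg_iff_add_eq_zero]
      rw [Nat.card_congr (Equiv.subtypeEquivRight hc),
        card_mem_ne W 0 ⟨P i, subset_span (Set.mem_range_self i), hi⟩, hfin]
  · rw [if_neg (by omega), if_neg (by rintro ⟨h, -⟩; omega),
      if_neg (by rintro ⟨h, -⟩; omega), add_zero, add_zero]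
    have : IsEmpty {x : Fin (k+1) → K //
        (Matrix.of (Fin.cons x P)).rank ≤ t ∧ ptrace (s+1) (Matrix.of (Fin.cons x P)) ≠ 0} := by
      refine ⟨fun x => absurd x.2.1 (not_le.mpr ?_)⟩
      exact lt_of_lt_of_le hgt (rank_le_rank_cons x.1 P)
    exact Nat.card_of_isEmpty

lemma sum_ite_card {α : Type*} [Fintype α] (p : α → Prop) [DecidablePred p] (v : ℕ) :
    ∑ a : α, (if p a then v else 0) = Nat.card {a : α // p a} * v := by
  classical
  rw [← Finset.sum_filter, Finset.sum_const, smul_eq_mul, Nat.card_eq_fintype_card,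
    Fintype.card_subtype]

lemma card_and_split {α : Type*} [Fintype α] (p q : α → Prop) [DecidablePred p]
    [DecidablePred q] :
    Nat.card {a : α // p a ∧ q a} + Nat.card {a : α // p a ∧ ¬ q a} = Nat.card {a : α // p a} := by
  classical
  simp only [Nat.card_eq_fintype_card, Fintype.card_subtype]
  rw [← Finset.filter_filter, ← Finset.filter_filter]
  exact Finset.card_filter_add_card_filter_not (p := q)

open Classical in
lemma hC_eq [Fintype K] (s t : ℕ) :
    Nat.card {P : Matrix (Fin n) (Fin (k+1)) K //
        P.rank = t ∧ (∀ i, P i 0 = 0) ∧ ptr' s P ≠ 0} = wfrak K n k s t := by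
  rw [Nat.card_congr (Equiv.subtypeEquivRight
    (q := fun P : Matrix (Fin n) (Fin (k+1)) K =>
      (∀ i, P i 0 = 0) ∧ (P.rank = t ∧ ptr' s P ≠ 0)) (fun P => by tauto))]
  rw [card_pcol (p := fun P => P.rank = t ∧ ptr' s P ≠ 0)]
  rw [Nat.card_congr (Equiv.subtypeEquivRight
    (q := fun N : Matrix (Fin n) (Fin k) K => N.rank = t ∧ ptrace s N ≠ 0)
    (fun N => by rw [pcol_rank, ptr'_pcol]))]
  rfl

open Classical in
lemma mu_split [Fintype K] (t : ℕ) :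
    Nat.card {P : Matrix (Fin n) (Fin (k+1)) K // P.rank = t ∧ ¬ (∀ i, P i 0 = 0)}
      + mu K n k t = mu K n (k+1) t := by
  have h1 := card_and_split (fun P : Matrix (Fin n) (Fin (k+1)) K => P.rank = t)
    (fun P => ∀ i, P i 0 = 0)
  have h2 : Nat.card {P : Matrix (Fin n) (Fin (k+1)) K // P.rank = t ∧ ∀ i, P i 0 = 0}
      = mu K n k t := by
    rw [Nat.card_congr (Equiv.subtypeEquivRight
      (q := fun P : Matrix (Fin n) (Fin (k+1)) K => (∀ i, P i 0 = 0) ∧ P.rank = t)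
      (fun P => by tauto))]
    rw [card_pcol (p := fun P => P.rank = t)]
    rw [Nat.card_congr (Equiv.subtypeEquivRight
      (q := fun N : Matrix (Fin n) (Fin k) K => N.rank = t)
      (fun N => by rw [pcol_rank]))]
    rfl
  have h3 : mu K n (k+1) t
      = Nat.card {a : Matrix (Fin n) (Fin (k+1)) K // a.rank = t} := rfl
  rw [h3, ← h1, h2]
  exact Nat.add_comm _ _

open Classical in
lemma aux_nat [Fintype K] (s t : ℕ) (ht : 1 ≤ t) :
    wle K (n+1) (k+1) (s+1) t =
      Fintype.card K ^ t * wfrak K n k s t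
      + (Fintype.card K ^ t - Fintype.card K ^ (t-1)) *
          Nat.card {P : Matrix (Fin n) (Fin (k+1)) K // P.rank = t ∧ ¬ (∀ i, P i 0 = 0)}
      + (Fintype.card K ^ (k+1) - Fintype.card K ^ k) * nu K n (k+1) (t-1) := by
  rw [wle, card_matrix_split (p := fun M => M.rank ≤ t ∧ ptrace (s+1) M ≠ 0)]
  rw [Finset.sum_congr rfl (fun P _ => inner_count ht s P)]
  rw [Finset.sum_add_distrib, Finset.sum_add_distrib,
    sum_ite_card, sum_ite_card, sum_ite_card, hC_eq]
  have hnu : Nat.card {P : Matrix (Fin n) (Fin (k+1)) K // P.rank ≤ t-1}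
      = nu K n (k+1) (t-1) := rfl
  rw [hnu]
  ring

end Aux

theorem stmt_6 (q t l m r : ℕ) (hq : IsPrimePow q)
    (K : Type) [Field K] [Fintype K] (hK : Fintype.card K = q)
    (hr : 1 ≤ r) (hrl : r ≤ l) (hlm : l ≤ m) (ht : 1 ≤ t) (htl : t < l) :
    (wle K l m r t : ℤ) =
      (q : ℤ) ^ t * wfrak K (l - 1) (m - 1) (r - 1) t
      + ((q : ℤ) - 1) * q ^ (t - 1) * ((mu K (l - 1) m t : ℤ) - (mu K (l - 1) (m - 1) t : ℤ))
      + ((q : ℤ) - 1) * q ^ (m - 1) * (nu K (l - 1) m (t - 1) : ℤ) := by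
  classical
  obtain ⟨n, rfl⟩ : ∃ n, l = n + 1 := ⟨l - 1, by omega⟩
  obtain ⟨k, rfl⟩ : ∃ k, m = k + 1 := ⟨m - 1, by omega⟩
  obtain ⟨s, rfl⟩ : ∃ s, r = s + 1 := ⟨r - 1, by omega⟩
  simp only [Nat.add_sub_cancel]
  have haux := aux_nat (K := K) (n := n) (k := k) s t ht
  have hmu := mu_split (K := K) (n := n) (k := k) t
  rw [hK] at haux
  have hq1 : 1 ≤ q := by
    rw [← hK]
    exact Fintype.card_pos
  have hle1 : q ^ (t-1) ≤ q ^ t := Nat.pow_le_pow_right hq1 (Nat.sub_le t 1)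
  have hle2 : q ^ k ≤ q ^ (k+1) := Nat.pow_le_pow_right hq1 (Nat.le_succ k)
  have hc := congrArg (Nat.cast : ℕ → ℤ) haux
  push_cast [Nat.cast_sub hle1, Nat.cast_sub hle2] at hc
  have hmu' : (Nat.card {P : Matrix (Fin n) (Fin (k+1)) K // P.rank = t ∧ ¬ (∀ i, P i 0 = 0)} : ℤ)
      + (mu K n k t : ℤ) = (mu K n (k+1) t : ℤ) := by exact_mod_cast hmu
  have ht2 : t = (t-1)+1 := (Nat.sub_add_cancel ht).symm
  have hqt : ((q:ℤ))^t = (q:ℤ)^(t-1) * q := by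
    conv_lhs => rw [ht2]
    rw [pow_succ]
  have hqk : ((q:ℤ))^(k+1) = (q:ℤ)^k * q := pow_succ _ _
  rw [hqt, hqk] at hc
  linear_combination hc + ((q:ℤ)-1)*(q:ℤ)^(t-1)*hmu' - (wfrak K n k s t : ℤ) * hqt
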